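/- Let u be a nondecreasing concave function, X a nonnegative random variable, and Y₁, Y₂ nonnegative random variables independent of X with distributions D₁ and D₂ such that D₁ stochastically dominates D₂ (i.e., P(Y₁ ≥ a) ≥ P(Y₂ ≥ a) for all a ≥ 0). Then E[u(X + Y₁) - u(Y₁)] ≤ E[u(X + Y₂) - u(Y₂)]. -/

import Mathlib

open MeasureTheory ProbabilityTheory

/-- Concavity implies decreasing increments. -/
lemma concave_increment {u : ℝ → ℝ} (hconc : ConcaveOn ℝ (Set.Ici (0 : ℝ)) u)
    {x a b : ℝ} (hx : 0 ≤ x) (ha : 0 ≤ a) (hab : a ≤ b) :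
    u (x + b) - u b ≤ u (x + a) - u a := by
  have hb : 0 ≤ b := le_trans ha hab
  rcases eq_or_lt_of_le (show a ≤ b + x by linarith) with h | h
  · have hx0 : x = 0 := by linarith
    have hab' : a = b := by linarith
    simp [hx0, hab']
  · set d : ℝ := b + x - a with hd
    have hd0 : 0 < d := by simp only [hd]; linarith
    set t : ℝ := x / d with ht
    have ht0 : 0 ≤ t := div_nonneg hx hd0.le
    have ht1 : t ≤ 1 := by
      rw [ht, div_le_one hd0]; linarith
    have key1 : (1 - t) * u a + t * u (b + x) ≤ u (a + x) := by
      have := hconc.2 (Set.mem_Ici.2 ha) (Set.mem_Ici.2 (by linarith : (0:ℝ) ≤ b + x))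
        (by linarith : (0:ℝ) ≤ 1 - t) ht0 (by ring)
      have harg : (1 - t) • a + t • (b + x) = a + x := by
        simp only [smul_eq_mul]
        field_simp [ht]
        have htd : t * d = x := div_mul_cancel₀ x hd0.ne'
        linear_combination htd - t * hd
      rwa [harg, smul_eq_mul, smul_eq_mul] at this
    have key2 : t * u a + (1 - t) * u (b + x) ≤ u b := by
      have := hconc.2 (Set.mem_Ici.2 ha) (Set.mem_Ici.2 (by linarith : (0:ℝ) ≤ b + x))
        ht0 (by linarith : (0:ℝ) ≤ 1 - t) (by ring)
      have harg : t • a + (1 - t) • (b + x) = b := by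
        simp only [smul_eq_mul]
        field_simp [ht]
        have htd : t * d = x := div_mul_cancel₀ x hd0.ne'
        linear_combination t * hd - htd
      rwa [harg, smul_eq_mul, smul_eq_mul] at this
    have : u (a + x) + u b ≥ u a + u (b + x) := by linarith
    have e1 : x + b = b + x := by ring
    have e2 : x + a = a + x := by ring
    rw [e1, e2]; linarith

/-- Stochastic dominance implies expectation inequality for antitone nonneg functions. -/
lemma antitone_integral_le {Ω : Type*} [MeasureSpace Ω] [IsProbabilityMeasure (ℙ : Measure Ω)]
    {Y₁ Y₂ : Ω → ℝ} (hY₁ : ∀ ω, 0 ≤ Y₁ ω) (hY₂ : ∀ ω, 0 ≤ Y₂ ω)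
    (hY₁meas : Measurable Y₁) (hY₂meas : Measurable Y₂)
    (hdom : ∀ a : ℝ, 0 ≤ a → ℙ {ω | a ≤ Y₂ ω} ≤ ℙ {ω | a ≤ Y₁ ω})
    {f : ℝ → ℝ} (hf : Antitone f) (hf0 : ∀ y, 0 ≤ f y) :
    ∫ ω, f (Y₁ ω) ∂ℙ ≤ ∫ ω, f (Y₂ ω) ∂ℙ := by
  have hfmeas : Measurable f := hf.measurable
  -- dominance for all reals (≤ version)
  have hdom' : ∀ a : ℝ, ℙ {ω | a ≤ Y₂ ω} ≤ ℙ {ω | a ≤ Y₁ ω} := by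
    intro a
    rcases le_or_gt 0 a with h | h
    · exact hdom a h
    · have h1 : {ω | a ≤ Y₁ ω} = Set.univ := by
        ext ω; simp [le_trans h.le (hY₁ ω)]
      have h2 : {ω | a ≤ Y₂ ω} = Set.univ := by
        ext ω; simp [le_trans h.le (hY₂ ω)]
      rw [h1, h2]
  -- dominance, strict version
  have hdom_lt : ∀ a : ℝ, ℙ {ω | a < Y₂ ω} ≤ ℙ {ω | a < Y₁ ω} := by
    intro a
    have hU : ∀ (Y : Ω → ℝ), {ω | a < Y ω} = ⋃ n : ℕ, {ω | a + 1/(n+1) ≤ Y ω} := by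
      intro Y
      ext ω
      simp only [Set.mem_setOf_eq, Set.mem_iUnion]
      constructor
      · intro h
        obtain ⟨n, hn⟩ := exists_nat_one_div_lt (show (0:ℝ) < Y ω - a by linarith)
        exact ⟨n, by linarith⟩
      · rintro ⟨n, hn⟩
        have : (0:ℝ) < 1/(n+1) := by positivity
        linarith
    have hdir : ∀ (Y : Ω → ℝ), Directed (· ⊆ ·) (fun n : ℕ => {ω | a + 1/(n+1) ≤ Y ω}) := by
      intro Y
      intro m n
      have h1 : (1:ℝ)/(max m n + 1) ≤ 1/(m+1) := by
        apply one_div_le_one_div_of_le (by positivity)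
        push_cast; simp [le_max_left]
      have h2 : (1:ℝ)/(max m n + 1) ≤ 1/(n+1) := by
        apply one_div_le_one_div_of_le (by positivity)
        push_cast; simp [le_max_right]
      refine ⟨max m n, fun ω hω => ?_, fun ω hω => ?_⟩ <;>
        simp only [Set.mem_setOf_eq] at hω ⊢ <;> linarith
    rw [hU Y₁, hU Y₂, Directed.measure_iUnion (hdir Y₁), Directed.measure_iUnion (hdir Y₂)]
    exact iSup_mono fun n => hdom' _
  -- key: distribution function comparison for f ∘ Y
  have hkey : ∀ t : ℝ, ℙ {ω | t < f (Y₁ ω)} ≤ ℙ {ω | t < f (Y₂ ω)} := by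
    intro t
    set S : Set ℝ := {y | t < f y} with hS
    have hpre : ∀ (Y : Ω → ℝ), {ω | t < f (Y ω)} = Y ⁻¹' S := fun Y => rfl
    have hlower : ∀ {y y' : ℝ}, y ∈ S → y' ≤ y → y' ∈ S := by
      intro y y' hy h
      exact lt_of_lt_of_le hy (hf h)
    by_cases hne : S = ∅
    · simp [hpre, hne]
    by_cases huniv : S = Set.univ
    · simp [hpre, huniv]
    · -- S is a proper nonempty lower set
      obtain ⟨z, hz⟩ : ∃ z, z ∉ S := by
        by_contra h
        push_neg at h
        exact huniv (Set.eq_univ_of_forall h)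
      have hbdd : BddAbove S := ⟨z, fun y hy => by
        by_contra h
        exact hz (hlower hy (le_of_not_ge h))⟩
      have hSne : S.Nonempty := Set.nonempty_iff_ne_empty.2 hne
      set s := sSup S with hs
      by_cases hmem : s ∈ S
      · -- S = Iic s
        have hSeq : S = Set.Iic s := by
          ext y
          constructor
          · intro hy; exact le_csSup hbdd hy
          · intro hy; exact hlower hmem hy
        have hcompl : ∀ (Y : Ω → ℝ), Y ⁻¹' S = {ω | s < Y ω}ᶜ := by
          intro Y; ext ω; simp [hSeq, not_lt]
        rw [hpre, hpre, hcompl, hcompl,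
          prob_compl_eq_one_sub (measurableSet_lt measurable_const hY₁meas),
          prob_compl_eq_one_sub (measurableSet_lt measurable_const hY₂meas)]
        exact tsub_le_tsub_left (hdom_lt s) 1
      · -- S = Iio s
        have hSeq : S = Set.Iio s := by
          ext y
          constructor
          · intro hy
            rcases lt_or_eq_of_le (le_csSup hbdd hy) with h | h
            · exact h
            · exfalso; apply hmem; rw [hs, ← h]; exact hy
          · intro hy
            obtain ⟨w, hw, hyw⟩ := exists_lt_of_lt_csSup hSne hy
            exact hlower hw hyw.le
        have hcompl : ∀ (Y : Ω → ℝ), Y ⁻¹' S = {ω | s ≤ Y ω}ᶜ := by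
          intro Y; ext ω; simp [hSeq, not_le]
        rw [hpre, hpre, hcompl, hcompl,
          prob_compl_eq_one_sub (measurableSet_le measurable_const hY₁meas),
          prob_compl_eq_one_sub (measurableSet_le measurable_const hY₂meas)]
        exact tsub_le_tsub_left (hdom' s) 1
  -- integrability (bounded by f 0)
  have hbound : ∀ (Y : Ω → ℝ), (∀ ω, 0 ≤ Y ω) → Measurable Y →
      Integrable (fun ω => f (Y ω)) ℙ := by
    intro Y hY hYm
    refine Integrable.mono' (integrable_const (f 0)) (hfmeas.comp hYm).aestronglyMeasurable ?_
    filter_upwards with ω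
    rw [Real.norm_eq_abs, abs_of_nonneg (hf0 _)]
    exact hf (hY ω)
  have hint1 := hbound Y₁ hY₁ hY₁meas
  have hint2 := hbound Y₂ hY₂ hY₂meas
  -- layer cake comparison
  have hlin : ∫⁻ ω, ENNReal.ofReal (f (Y₁ ω)) ∂ℙ ≤ ∫⁻ ω, ENNReal.ofReal (f (Y₂ ω)) ∂ℙ := by
    rw [lintegral_eq_lintegral_meas_lt ℙ (Filter.Eventually.of_forall fun ω => hf0 _)
        (hfmeas.comp hY₁meas).aemeasurable,
      lintegral_eq_lintegral_meas_lt ℙ (Filter.Eventually.of_forall fun ω => hf0 _)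
        (hfmeas.comp hY₂meas).aemeasurable]
    exact lintegral_mono fun t => hkey t
  rw [integral_eq_lintegral_of_nonneg_ae (Filter.Eventually.of_forall fun ω => hf0 _)
      (hfmeas.comp hY₁meas).aestronglyMeasurable,
    integral_eq_lintegral_of_nonneg_ae (Filter.Eventually.of_forall fun ω => hf0 _)
      (hfmeas.comp hY₂meas).aestronglyMeasurable]
  exact ENNReal.toReal_mono (hint2.lintegral_lt_top).ne hlin

theorem stochastic_dominance_marginal_utility
    {Ω : Type*} [MeasureSpace Ω] [IsProbabilityMeasure (ℙ : Measure Ω)]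
    (u : ℝ → ℝ) (hconc : ConcaveOn ℝ (Set.Ici (0 : ℝ)) u) (hmono : Monotone u)
    (X Y₁ Y₂ : Ω → ℝ)
    (hX : ∀ ω, 0 ≤ X ω) (hY₁ : ∀ ω, 0 ≤ Y₁ ω) (hY₂ : ∀ ω, 0 ≤ Y₂ ω)
    (hXmeas : Measurable X) (hY₁meas : Measurable Y₁) (hY₂meas : Measurable Y₂)
    (hind₁ : IndepFun X Y₁ ℙ) (hind₂ : IndepFun X Y₂ ℙ)
    (hdom : ∀ a : ℝ, 0 ≤ a → ℙ {ω | a ≤ Y₂ ω} ≤ ℙ {ω | a ≤ Y₁ ω})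
    (hint₁ : Integrable (fun ω => u (X ω + Y₁ ω)) ℙ)
    (hint₂ : Integrable (fun ω => u (X ω + Y₂ ω)) ℙ)
    (hint₃ : Integrable (fun ω => u (Y₁ ω)) ℙ)
    (hint₄ : Integrable (fun ω => u (Y₂ ω)) ℙ) :
    ∫ ω, (u (X ω + Y₁ ω) - u (Y₁ ω)) ∂ℙ ≤ ∫ ω, (u (X ω + Y₂ ω) - u (Y₂ ω)) ∂ℙ := by
  have humeas : Measurable u := hmono.measurable
  set g : ℝ × ℝ → ℝ := fun p => u (p.1 + p.2) - u p.2 with hg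
  have hgmeas : Measurable g :=
    (humeas.comp (measurable_fst.add measurable_snd)).sub (humeas.comp measurable_snd)
  set ν : Measure ℝ := Measure.map X (ℙ : Measure Ω) with hν
  haveI : IsProbabilityMeasure ν := Measure.isProbabilityMeasure_map hXmeas.aemeasurable
  -- main decomposition for each Yᵢ
  have hdecomp : ∀ (Y : Ω → ℝ), Measurable Y → IndepFun X Y ℙ →
      Integrable (fun ω => u (X ω + Y ω) - u (Y ω)) ℙ →
      (∫ ω, (u (X ω + Y ω) - u (Y ω)) ∂ℙ = ∫ x, ∫ ω, g (x, Y ω) ∂ℙ ∂ν) ∧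
      Integrable (fun x => ∫ ω, g (x, Y ω) ∂ℙ) ν := by
    intro Y hYm hind hintg
    haveI : IsProbabilityMeasure (Measure.map Y (ℙ : Measure Ω)) := Measure.isProbabilityMeasure_map hYm.aemeasurable
    have hpair : Measurable (fun ω => (X ω, Y ω)) := hXmeas.prodMk hYm
    have hmap : Measure.map (fun ω => (X ω, Y ω)) (ℙ : Measure Ω) = ν.prod (Measure.map Y (ℙ : Measure Ω)) :=
      (indepFun_iff_map_prod_eq_prod_map_map hXmeas.aemeasurable hYm.aemeasurable).mp hind
    have hgint : Integrable g (ν.prod (Measure.map Y (ℙ : Measure Ω))) := by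
      rw [← hmap]
      exact (integrable_map_measure hgmeas.aestronglyMeasurable hpair.aemeasurable).mpr hintg
    have h1 : ∫ ω, (u (X ω + Y ω) - u (Y ω)) ∂ℙ = ∫ p, g p ∂(ν.prod (Measure.map Y (ℙ : Measure Ω))) := by
      rw [← hmap, integral_map hpair.aemeasurable hgmeas.aestronglyMeasurable]
    have h2 : ∫ p, g p ∂(ν.prod (Measure.map Y (ℙ : Measure Ω))) = ∫ x, ∫ y, g (x, y) ∂(Measure.map Y (ℙ : Measure Ω)) ∂ν :=
      integral_prod g hgint
    have h3 : ∀ x : ℝ, ∫ y, g (x, y) ∂(Measure.map Y (ℙ : Measure Ω)) = ∫ ω, g (x, Y ω) ∂ℙ := fun x =>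
      integral_map hYm.aemeasurable ((hgmeas.comp (measurable_prodMk_left)).aestronglyMeasurable)
    constructor
    · rw [h1, h2]; exact integral_congr_ae (Filter.Eventually.of_forall h3)
    · have := hgint.integral_prod_left
      refine this.congr (Filter.Eventually.of_forall fun x => ?_)
      exact (h3 x)
  obtain ⟨heq1, hintI1⟩ := hdecomp Y₁ hY₁meas hind₁ (hint₁.sub hint₃)
  obtain ⟨heq2, hintI2⟩ := hdecomp Y₂ hY₂meas hind₂ (hint₂.sub hint₄)
  rw [heq1, heq2]
  -- a.e. x is nonnegative
  have hae : ∀ᵐ x ∂ν, 0 ≤ x := by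
    rw [hν]
    exact (ae_map_iff hXmeas.aemeasurable measurableSet_Ici).mpr
      (Filter.Eventually.of_forall hX)
  refine integral_mono_ae hintI1 hintI2 ?_
  filter_upwards [hae] with x hx
  -- for fixed x ≥ 0, apply the antitone lemma
  set f : ℝ → ℝ := fun y => u (x + max y 0) - u (max y 0) with hfdef
  have hfant : Antitone f := by
    intro y z hyz
    exact concave_increment hconc hx (le_max_right y 0) (max_le_max hyz le_rfl)
  have hf0 : ∀ y, 0 ≤ f y := fun y =>
    sub_nonneg.2 (hmono (by linarith [le_max_right y 0] : max y 0 ≤ x + max y 0))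
  have hcongr : ∀ (Y : Ω → ℝ), (∀ ω, 0 ≤ Y ω) →
      (fun ω => g (x, Y ω)) = fun ω => f (Y ω) := by
    intro Y hY
    funext ω
    simp [hg, hfdef, max_eq_left (hY ω)]
  rw [hcongr Y₁ hY₁, hcongr Y₂ hY₂]
  exact antitone_integral_le hY₁ hY₂ hY₁meas hY₂meas hdom hfant hf0
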